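/- Define coefficients e_{k,0} by e_{k,0} = (−1)^{k+1}/(k+3) − 2 Σ_{l=1}^{k} ((−1)^l/(l+2)) e_{k−l,0} − Σ_{l=1}^{k} Σ_{m=1}^{l} ((−1)^m/(m+1)) e_{k−l,0} e_{l−m,0}. Then e_{0,0} = −1/3, and the formal power series c_0(x) = Σ_{k≥0} e_{k,0} x^k satisfies 2(Σ_{k≥2}(−1)^k x^k/k)·(x·c_0(x) − 1)² = x² as formal power series in x = λ − 1. -/

import Mathlib

open PowerSeries Finset

-- helper: Icc 1 k sums to range k
lemma icc_sum (f : ℕ → ℚ) (k : ℕ) :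
    ∑ l ∈ Finset.Icc 1 k, f l = ∑ i ∈ Finset.range k, f (i + 1) := by
  rw [← Finset.Ico_add_one_right_eq_Icc, Finset.sum_Ico_eq_sum_range]
  simp [add_comm]

-- key reindexing of the double sum
lemma double_sum_reindex (e : ℕ → ℚ) (k : ℕ) :
    ∑ l ∈ Finset.Icc 1 k, ∑ m ∈ Finset.Icc 1 l,
        ((-1 : ℚ) ^ m / (m + 1)) * e (k - l) * e (l - m)
      = ∑ j ∈ Finset.range k, ((-1 : ℚ) ^ (j+1) / (j + 2)) *
          ∑ a ∈ Finset.range (k - j), e a * e (k - 1 - j - a) := by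
  rw [Finset.sum_sigma']
  simp_rw [Finset.mul_sum]
  rw [Finset.sum_sigma']
  refine Finset.sum_nbij' (fun p => ⟨p.2 - 1, k - p.1⟩) (fun q => ⟨k - q.2, q.1 + 1⟩) ?_ ?_ ?_ ?_ ?_
  · rintro ⟨l, m⟩ hp
    simp only [Finset.mem_sigma, Finset.mem_Icc, Finset.mem_range] at hp ⊢
    omega
  · rintro ⟨j, a⟩ hq
    simp only [Finset.mem_sigma, Finset.mem_Icc, Finset.mem_range] at hq ⊢
    omega
  · rintro ⟨l, m⟩ hp
    simp only [Finset.mem_sigma, Finset.mem_Icc] at hp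
    simp only [Sigma.mk.inj_iff]
    constructor
    · omega
    · exact heq_of_eq (by omega)
  · rintro ⟨j, a⟩ hq
    simp only [Finset.mem_sigma, Finset.mem_Icc, Finset.mem_range] at hq
    simp only [Sigma.mk.inj_iff]
    constructor
    · omega
    · exact heq_of_eq (by omega)
  · rintro ⟨l, m⟩ hp
    simp only [Finset.mem_sigma, Finset.mem_Icc] at hp
    have h1 : (m - 1 : ℕ) + 1 = m := by omega
    have h2 : (m - 1 : ℕ) + 2 = m + 1 := by omega
    have h3 : k - 1 - (m - 1) - (k - l) = l - m := by omega
    rw [h1, h3]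
    have h2' : ((m - 1 : ℕ) : ℚ) + 2 = (m : ℚ) + 1 := by exact_mod_cast congrArg (Nat.cast (R := ℚ)) h2
    rw [h2']
    ring

theorem e_recurrence_solution (e : ℕ → ℚ)
    (hrec : ∀ k : ℕ, e k = (-1 : ℚ) ^ (k + 1) / (k + 3)
      - 2 * ∑ l ∈ Finset.Icc 1 k, ((-1 : ℚ) ^ l / (l + 2)) * e (k - l)
      - ∑ l ∈ Finset.Icc 1 k, ∑ m ∈ Finset.Icc 1 l,
          ((-1 : ℚ) ^ m / (m + 1)) * e (k - l) * e (l - m)) :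
    e 0 = -(1 / 3) ∧
    2 * (PowerSeries.mk fun k : ℕ => if 2 ≤ k then (-1 : ℚ) ^ k / k else 0) *
        (PowerSeries.X * PowerSeries.mk e - 1) ^ 2 = (PowerSeries.X : PowerSeries ℚ) ^ 2 := by
  have he0 : e 0 = -(1 / 3) := by
    have h := hrec 0
    norm_num at h
    linarith
  refine ⟨he0, ?_⟩
  set M : ℚ⟦X⟧ := PowerSeries.mk (fun n : ℕ => (-1 : ℚ) ^ n / (n + 2)) with hM
  set E : ℚ⟦X⟧ := PowerSeries.mk e with hEdef
  have L_eq : (PowerSeries.mk fun k : ℕ => if 2 ≤ k then (-1 : ℚ) ^ k / k else 0)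
      = X ^ 2 * M := by
    ext n
    rw [coeff_X_pow_mul']
    simp only [coeff_mk, hM]
    split_ifs with h
    · have h1 : (-1 : ℚ) ^ (n - 2) = (-1 : ℚ) ^ n := by
        conv_rhs => rw [← Nat.sub_add_cancel h]
        rw [pow_add]; norm_num
      have h2 : ((n - 2 : ℕ) : ℚ) + 2 = (n : ℚ) := by
        have : (n - 2 : ℕ) + 2 = n := by omega
        exact_mod_cast congrArg (Nat.cast (R := ℚ)) this
      rw [h1, h2]
    · rfl
  have hME : ∀ K : ℕ, coeff K (M * E)
      = ∑ l ∈ Finset.range (K + 1), ((-1 : ℚ) ^ l / (l + 2)) * e (K - l) := by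
    intro K
    rw [coeff_mul, Finset.Nat.sum_antidiagonal_eq_sum_range_succ_mk]
    simp [hM, hEdef]
  have hEE : ∀ i : ℕ, coeff i (E * E)
      = ∑ a ∈ Finset.range (i + 1), e a * e (i - a) := by
    intro i
    rw [coeff_mul, Finset.Nat.sum_antidiagonal_eq_sum_range_succ_mk]
    simp [hEdef]
  have hMEE : ∀ K : ℕ, coeff K (M * (E * E))
      = ∑ j ∈ Finset.range (K + 1), ((-1 : ℚ) ^ j / (j + 2)) *
          ∑ a ∈ Finset.range (K - j + 1), e a * e (K - j - a) := by
    intro K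
    rw [coeff_mul, Finset.Nat.sum_antidiagonal_eq_sum_range_succ_mk]
    simp only [hEE]
    simp only [hM, hEdef, coeff_mk]
  have key : 2 * M * (X * E - 1) ^ 2 = 1 := by
    have h2 : (C 2 : ℚ⟦X⟧) = 2 := map_ofNat _ 2
    have h4 : (C 4 : ℚ⟦X⟧) = 4 := map_ofNat _ 4
    have expand : 2 * M * (X * E - 1) ^ 2
        = X ^ 2 * (C 2 * (M * (E * E))) - X ^ 1 * (C 4 * (M * E)) + C 2 * M := by
      rw [h2, h4]; ring
    rw [expand]
    ext n
    rw [map_add, map_sub, coeff_X_pow_mul', coeff_X_pow_mul', coeff_C_mul]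
    match n with
    | 0 =>
      norm_num [hM]
    | 1 =>
      norm_num [hM, coeff_C_mul, hME, he0, coeff_one, hEdef, constantCoeff_mk]
    | (k + 2) =>
      have hgate2 : 2 ≤ k + 2 := by omega
      have hgate1 : 1 ≤ k + 2 := by omega
      rw [if_pos hgate2, if_pos hgate1, coeff_C_mul, coeff_C_mul]
      have hred2 : k + 2 - 2 = k := by omega
      have hred1 : k + 2 - 1 = k + 1 := by omega
      rw [hred2, hred1, hMEE k, hME (k + 1)]
      simp only [hM, coeff_mk, coeff_one]
      -- rewrite the recurrence for e (k+1)
      have h := hrec (k + 1)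
      rw [double_sum_reindex e (k + 1),
        icc_sum (fun l => ((-1 : ℚ) ^ l / (l + 2)) * e (k + 1 - l)) (k + 1)] at h
      -- normalize the reindexed double sum to match hMEE's shape
      have hD : ∑ j ∈ Finset.range (k + 1), ((-1 : ℚ) ^ (j + 1) / (j + 2)) *
            ∑ a ∈ Finset.range (k + 1 - j), e a * e (k + 1 - 1 - j - a)
          = -∑ j ∈ Finset.range (k + 1), ((-1 : ℚ) ^ j / (j + 2)) *
              ∑ a ∈ Finset.range (k - j + 1), e a * e (k - j - a) := by
        rw [← Finset.sum_neg_distrib]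
        refine Finset.sum_congr rfl fun j hj => ?_
        have hj' : j < k + 1 := Finset.mem_range.mp hj
        have hr : k + 1 - j = k - j + 1 := by omega
        have hinner : ∑ a ∈ Finset.range (k + 1 - j), e a * e (k + 1 - 1 - j - a)
            = ∑ a ∈ Finset.range (k - j + 1), e a * e (k - j - a) := by
          rw [hr]
          refine Finset.sum_congr rfl fun a _ => ?_
          congr 1
        rw [hinner, pow_succ]
        ring
      rw [hD] at h
      -- split the range (k+2) sum
      rw [Finset.sum_range_succ' (fun l => ((-1 : ℚ) ^ l / (l + 2)) * e (k + 1 - l)) (k + 1)]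
      push_cast at h ⊢
      set A := ∑ i ∈ Finset.range (k + 1),
          ((-1 : ℚ) ^ (i + 1) / ((i : ℚ) + 1 + 2)) * e (k + 1 - (i + 1)) with hA
      set B := ∑ j ∈ Finset.range (k + 1), ((-1 : ℚ) ^ j / ((j : ℚ) + 2)) *
          ∑ a ∈ Finset.range (k - j + 1), e a * e (k - j - a) with hB
      norm_num
      linear_combination (-2 : ℚ) * h
  rw [L_eq]
  calc 2 * (X ^ 2 * M) * (X * E - 1) ^ 2 = X ^ 2 * (2 * M * (X * E - 1) ^ 2) := by ring
    _ = X ^ 2 := by rw [key, mul_one]
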